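/- Let H be a hypergraph with an Euler family F and incidence graph G, let G_F be the subgraph of G corresponding to F, let C be an F-interchanging cycle in G, and let G1, …, Gk be all of the connected components of G_F that contain vertices of C. If for each i = 1, …, k the graph G_i minus the edges of C has at most one nontrivial connected component, then the subgraph of G_F Δ C induced by V(G1) ∪ … ∪ V(Gk) has at most one nontrivial connected component. -/

import Mathlib

open scoped Classical

/-- A hypergraph: a finite nonempty vertex type `V`, a finite index type `E` of
edges (so that repeated edges are allowed, as in a multiset of edges), and a map
`mem` assigning to each edge the finite set of its vertices. -/
structure Hypergraph' where
  V : Type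
  E : Type
  [fintypeV : Fintype V]
  [fintypeE : Fintype E]
  [nonemptyV : Nonempty V]
  mem : E → Finset V

attribute [instance] Hypergraph'.fintypeV Hypergraph'.fintypeE Hypergraph'.nonemptyV

namespace Hypergraph'

/-- A walk `v₀ e₁ v₁ e₂ … e_k v_k` in a hypergraph: consecutive anchors are
distinct and both lie in the connecting edge. -/
structure Walk (H : Hypergraph') where
  k : ℕ
  vtx : Fin (k + 1) → H.V
  edge : Fin k → H.E
  mem_left : ∀ i : Fin k, vtx i.castSucc ∈ H.mem (edge i)
  mem_right : ∀ i : Fin k, vtx i.succ ∈ H.mem (edge i)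
  ne : ∀ i : Fin k, vtx i.castSucc ≠ vtx i.succ

/-- A trail is a walk with pairwise distinct edges. -/
def Walk.IsTrail {H : Hypergraph'} (W : H.Walk) : Prop :=
  Function.Injective W.edge

/-- A closed walk: `v₀ = v_k` and `k ≥ 2`. -/
def Walk.IsClosed {H : Hypergraph'} (W : H.Walk) : Prop :=
  W.vtx 0 = W.vtx (Fin.last W.k) ∧ 2 ≤ W.k

def Walk.IsClosedTrail {H : Hypergraph'} (W : H.Walk) : Prop :=
  W.IsTrail ∧ W.IsClosed

/-- The anchors of a walk. -/
def Walk.anchors {H : Hypergraph'} (W : H.Walk) : Set H.V := Set.range W.vtx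

/-- The set of edges traversed by a walk. -/
def Walk.edgeSet {H : Hypergraph'} (W : H.Walk) : Set H.E := Set.range W.edge

/-- An Euler tour: a closed trail traversing every edge exactly once. -/
def IsEulerTour (H : Hypergraph') (W : H.Walk) : Prop :=
  W.IsClosedTrail ∧ Function.Bijective W.edge

def HasEulerTour (H : Hypergraph') : Prop := ∃ W : H.Walk, H.IsEulerTour W

/-- A hypergraph is eulerian if it has no edges or admits an Euler tour. -/
def IsEulerian (H : Hypergraph') : Prop := IsEmpty H.E ∨ H.HasEulerTour

/-- An Euler family: a set of pairwise anchor-disjoint, edge-disjoint closed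
trails jointly traversing every edge exactly once. -/
def IsEulerFamily (H : Hypergraph') (F : Set H.Walk) : Prop :=
  (∀ W ∈ F, W.IsClosedTrail) ∧
  (∀ W ∈ F, ∀ W' ∈ F, W ≠ W' →
    Disjoint W.anchors W'.anchors ∧ Disjoint W.edgeSet W'.edgeSet) ∧
  (∀ e : H.E, ∃ W ∈ F, e ∈ W.edgeSet)

/-- A hypergraph is quasi-eulerian if it has no edges or admits an Euler family. -/
def IsQuasiEulerian (H : Hypergraph') : Prop :=
  IsEmpty H.E ∨ ∃ F : Set H.Walk, H.IsEulerFamily F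

/-- A minimum Euler family: one with the fewest components. -/
def IsMinEulerFamily (H : Hypergraph') (F : Set H.Walk) : Prop :=
  H.IsEulerFamily F ∧ ∀ F' : Set H.Walk, H.IsEulerFamily F' → F.ncard ≤ F'.ncard

/-- `H` is `k`-uniform if each edge has exactly `k` vertices. -/
def IsUniform (H : Hypergraph') (k : ℕ) : Prop := ∀ e : H.E, (H.mem e).card = k

/-- A covering `k`-hypergraph (`k ≥ 3`): a nonempty `k`-uniform hypergraph in
which every `(k-1)`-subset of the vertex set lies in at least one edge. -/
def IsCovering (H : Hypergraph') (k : ℕ) : Prop :=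
  3 ≤ k ∧ Nonempty H.E ∧ H.IsUniform k ∧
    ∀ S : Finset H.V, S.card = k - 1 → ∃ e : H.E, S ⊆ H.mem e

/-- The incidence graph of a hypergraph: the bipartite simple graph on
`V ⊕ E` joining `v` and `e` exactly when `v ∈ e`. -/
def incidenceGraph (H : Hypergraph') : SimpleGraph (H.V ⊕ H.E) where
  Adj x y :=
    (∃ v e, x = Sum.inl v ∧ y = Sum.inr e ∧ v ∈ H.mem e) ∨
    (∃ v e, x = Sum.inr e ∧ y = Sum.inl v ∧ v ∈ H.mem e)
  symm := by
    constructor; rintro x y (⟨v, e, rfl, rfl, h⟩ | ⟨v, e, rfl, rfl, h⟩)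
    · exact Or.inr ⟨v, e, rfl, rfl, h⟩
    · exact Or.inl ⟨v, e, rfl, rfl, h⟩
  loopless := by
    constructor; rintro x (⟨v, e, rfl, h, -⟩ | ⟨v, e, rfl, h, -⟩) <;> exact absurd h (by simp)

/-- `v` and `e` appear consecutively in some trail of the family `F`. -/
def ConsecIn (H : Hypergraph') (F : Set H.Walk) (v : H.V) (e : H.E) : Prop :=
  ∃ W ∈ F, ∃ i : Fin W.k, W.edge i = e ∧ (W.vtx i.castSucc = v ∨ W.vtx i.succ = v)

/-- The spanning subgraph of the incidence graph corresponding to an Euler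
family `F`: its edges are the incident pairs `ve` consecutive in some trail of `F`. -/
def eulerSubgraph (H : Hypergraph') (F : Set H.Walk) : SimpleGraph (H.V ⊕ H.E) where
  Adj x y :=
    (∃ v e, x = Sum.inl v ∧ y = Sum.inr e ∧ H.ConsecIn F v e) ∨
    (∃ v e, x = Sum.inr e ∧ y = Sum.inl v ∧ H.ConsecIn F v e)
  symm := by
    constructor; rintro x y (⟨v, e, rfl, rfl, h⟩ | ⟨v, e, rfl, rfl, h⟩)
    · exact Or.inr ⟨v, e, rfl, rfl, h⟩
    · exact Or.inl ⟨v, e, rfl, rfl, h⟩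
  loopless := by
    constructor; rintro x (⟨v, e, rfl, h, -⟩ | ⟨v, e, rfl, h, -⟩) <;> exact absurd h (by simp)

end Hypergraph'

/-- The degree of a vertex of a simple graph (number of neighbours). -/
noncomputable def sdeg {α : Type*} (G : SimpleGraph α) (x : α) : ℕ :=
  (G.neighborSet x).ncard

/-- A connected component of a simple graph is nontrivial if it contains an edge. -/
def NontrivComp {α : Type*} (G : SimpleGraph α) (c : G.ConnectedComponent) : Prop :=
  ∃ x y, G.Adj x y ∧ G.connectedComponentMk x = c

/-- The number of nontrivial connected components of a simple graph. -/
noncomputable def ntComps {α : Type*} (G : SimpleGraph α) : ℕ :=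
  {c : G.ConnectedComponent | NontrivComp G c}.ncard

/-- A cut vertex of a simple graph: a vertex whose deletion increases the number
of connected components, i.e. some two vertices distinct from it are joined by a
walk but by no walk avoiding it. -/
def IsCutVtx {α : Type*} (G : SimpleGraph α) (v : α) : Prop :=
  ∃ x y, x ≠ v ∧ y ≠ v ∧ G.Reachable x y ∧ ¬ ∃ p : G.Walk x y, v ∉ p.support

/-- An `F`-interchanging cycle: a cycle of the incidence graph such that every
e-vertex on it is incident in `G_F` with exactly one edge of the cycle. -/
def IsInterchanging (H : Hypergraph') (F : Set H.Walk) {x : H.V ⊕ H.E}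
    (C : (H.incidenceGraph).Walk x x) : Prop :=
  C.IsCycle ∧ ∀ e : H.E, (Sum.inr e : H.V ⊕ H.E) ∈ C.support →
    ∃! s : Sym2 (H.V ⊕ H.E),
      s ∈ C.edges ∧ (Sum.inr e : H.V ⊕ H.E) ∈ s ∧ s ∈ (H.eulerSubgraph F).edgeSet

/-- The symmetric difference of a simple graph with a set of potential edges. -/
def symmDiffEdges {α : Type*} (G : SimpleGraph α) (s : Set (Sym2 α)) : SimpleGraph α :=
  SimpleGraph.fromEdgeSet (symmDiff G.edgeSet s)

/-- An `F`-diminishing cycle: an `F`-interchanging cycle `C` such that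
`G_F Δ C` has fewer nontrivial connected components than `G_F`. -/
def IsDiminishing (H : Hypergraph') (F : Set H.Walk) {x : H.V ⊕ H.E}
    (C : (H.incidenceGraph).Walk x x) : Prop :=
  IsInterchanging H F C ∧
    ntComps (symmDiffEdges (H.eulerSubgraph F) {s | s ∈ C.edges}) <
      ntComps (H.eulerSubgraph F)

lemma aux_reach_induce_mono {α : Type*} {G1 G2 : SimpleGraph α} {A B : Set α}
    (hAB : A ⊆ B) (hadj : ∀ z w, z ∈ A → w ∈ A → G1.Adj z w → G2.Adj z w)
    {a b : α} (ha : a ∈ A) (hb : b ∈ A)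
    (h : (G1.induce A).Reachable ⟨a, ha⟩ ⟨b, hb⟩) :
    (G2.induce B).Reachable ⟨a, hAB ha⟩ ⟨b, hAB hb⟩ := by
  let f : G1.induce A →g G2.induce B :=
    ⟨fun z => ⟨z.1, hAB z.2⟩, by
      rintro ⟨z, hz⟩ ⟨w, hw⟩ hzw
      exact hadj z w hz hw hzw⟩
  exact h.map f


lemma aux_path_end_edge_unique {α : Type*} {G : SimpleGraph α} :
    ∀ {a b : α} (p : G.Walk a b), p.IsPath →
      ∀ s ∈ p.edges, ∀ t ∈ p.edges, b ∈ s → b ∈ t → s = t := by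
  intro a b p
  induction p with
  | nil => simp
  | @cons a c b h q ih =>
    intro hp s hs t ht hbs hbt
    rw [SimpleGraph.Walk.cons_isPath_iff] at hp
    obtain ⟨hq, hna⟩ := hp
    have key : ∀ u, u ∈ q.edges → b ∈ (s(a, c) : Sym2 α) → False := by
      intro u hu hb
      rcases Sym2.mem_iff.mp hb with rfl | rfl
      · exact hna q.end_mem_support
      · rw [SimpleGraph.Walk.isPath_iff_eq_nil] at hq
        subst hq; simp at hu
    rcases List.mem_cons.mp hs with rfl | hs' <;> rcases List.mem_cons.mp ht with rfl | ht'
    · rfl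
    · exact (key t ht' hbs).elim
    · exact (key s hs' hbt).elim
    · exact ih hq s hs' t ht' hbs hbt

lemma aux_cycle_two_edges {α : Type*} {G : SimpleGraph α} {x : α} {C : G.Walk x x}
    (hC : C.IsCycle) {u : α} (hu : u ∈ C.support) :
    ∃ s1 s2, s1 ≠ s2 ∧ s1 ∈ C.edges ∧ s2 ∈ C.edges ∧ u ∈ s1 ∧ u ∈ s2 ∧
      ∀ s ∈ C.edges, u ∈ s → s = s1 ∨ s = s2 := by
  have hrot := hC.rotate hu
  have hperm : List.Perm (C.rotate u hu).edges C.edges := (C.rotate_edges u hu).perm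
  have hmem : ∀ s : Sym2 α, s ∈ (C.rotate u hu).edges ↔ s ∈ C.edges := fun s => hperm.mem_iff
  set D := C.rotate u hu with hD
  clear_value D
  cases D with
  | nil => exact absurd rfl hrot.ne_nil
  | @cons _ w _ h q =>
    rw [SimpleGraph.Walk.cons_isCycle_iff] at hrot
    obtain ⟨hq, hne⟩ := hrot
    -- find the edge of q at its endpoint u via q.reverse
    have hqrev : q.reverse.edges = q.edges.reverse := q.edges_reverse
    have hqne : ¬ q.Nil := by
      intro h0
      cases q with
      | nil => exact G.loopless.irrefl u h
      | cons h' q' => exact SimpleGraph.Walk.not_nil_cons h0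
    obtain ⟨w', hadj, q', hq'⟩ := SimpleGraph.Walk.not_nil_iff.mp (by
      rw [SimpleGraph.Walk.nil_iff_length_eq, SimpleGraph.Walk.length_reverse,
        ← SimpleGraph.Walk.nil_iff_length_eq]; exact hqne : ¬ q.reverse.Nil)
    have hs2q : (s(u, w') : Sym2 α) ∈ q.edges := by
      have : (s(u, w') : Sym2 α) ∈ q.reverse.edges := by
        rw [hq']; simp
      rwa [hqrev, List.mem_reverse] at this
    refine ⟨s(u, w), s(u, w'), ?_, (hmem _).mp (by simp), (hmem _).mp
      (by simp [SimpleGraph.Walk.edges_cons, hs2q]), by simp, by simp, ?_⟩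
    · intro heq; rw [heq] at hne; exact hne hs2q
    · intro s hs hus
      rcases List.mem_cons.mp ((hmem s).mpr hs) with rfl | hs'
      · exact Or.inl rfl
      · exact Or.inr (aux_path_end_edge_unique q hq s hs' _ hs2q hus (by simp))
section AuxBasic

variable {H : Hypergraph'} {F : Set H.Walk}

lemma gf_adj_iff {v : H.V} {e : H.E} :
    (H.eulerSubgraph F).Adj (Sum.inl v) (Sum.inr e) ↔ H.ConsecIn F v e := by
  constructor
  · rintro (⟨v', e', hv, he, h⟩ | ⟨v', e', hv, he, h⟩)
    · rw [Sum.inl.injEq] at hv; rw [Sum.inr.injEq] at he; subst hv; subst he; exact h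
    · exact absurd hv (by simp)
  · intro h; exact Or.inl ⟨v, e, rfl, rfl, h⟩

lemma gf_edge_iff {v : H.V} {e : H.E} :
    s(Sum.inl v, Sum.inr e) ∈ (H.eulerSubgraph F).edgeSet ↔ H.ConsecIn F v e := by
  rw [SimpleGraph.mem_edgeSet]; exact gf_adj_iff

lemma gf_adj_cases {z w : H.V ⊕ H.E} (h : (H.eulerSubgraph F).Adj z w) :
    ∃ v e, H.ConsecIn F v e ∧
      ((z = Sum.inl v ∧ w = Sum.inr e) ∨ (z = Sum.inr e ∧ w = Sum.inl v)) := by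
  rcases h with ⟨v, e, hz, hw, h⟩ | ⟨v, e, hz, hw, h⟩
  · exact ⟨v, e, h, Or.inl ⟨hz, hw⟩⟩
  · exact ⟨v, e, h, Or.inr ⟨hz, hw⟩⟩

lemma gi_adj_cases {z w : H.V ⊕ H.E} (h : (H.incidenceGraph).Adj z w) :
    ∃ v e, (z = Sum.inl v ∧ w = Sum.inr e) ∨ (z = Sum.inr e ∧ w = Sum.inl v) := by
  rcases h with ⟨v, e, hz, hw, h⟩ | ⟨v, e, hz, hw, h⟩
  · exact ⟨v, e, Or.inl ⟨hz, hw⟩⟩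
  · exact ⟨v, e, Or.inr ⟨hz, hw⟩⟩

lemma consec_pair {v : H.V} {e : H.E} (h : H.ConsecIn F v e) :
    ∃ a b : H.V, a ≠ b ∧ H.ConsecIn F a e ∧ H.ConsecIn F b e := by
  obtain ⟨W, hW, i, he, -⟩ := h
  exact ⟨W.vtx i.castSucc, W.vtx i.succ, W.ne i,
    ⟨W, hW, i, he, Or.inl rfl⟩, ⟨W, hW, i, he, Or.inr rfl⟩⟩

lemma vtx_second_edge (hF : H.IsEulerFamily F) {v : H.V} {e : H.E}
    (h : H.ConsecIn F v e) : ∃ e', e' ≠ e ∧ H.ConsecIn F v e' := by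
  obtain ⟨W, hW, i, he, hv⟩ := h
  obtain ⟨htr, -, -⟩ := hF
  obtain ⟨htrW, hc0, hk2⟩ := htr W hW
  have hkpos : 0 < W.k := by omega
  rcases hv with hv | hv
  · -- v = W.vtx i.castSucc ; use previous edge
    by_cases hp : 0 < i.val
    · refine ⟨W.edge ⟨i.val - 1, by omega⟩, ?_, W, hW, ⟨i.val - 1, by omega⟩, rfl, Or.inr ?_⟩
      · intro heq; rw [← he] at heq
        have := htrW heq
        have : i.val - 1 = i.val := congrArg Fin.val this
        omega
      · rw [← hv]; congr 1; ext; simp; omega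
    · -- i.val = 0 : v = vtx 0 = vtx last ; use edge (k-1)
      refine ⟨W.edge ⟨W.k - 1, by omega⟩, ?_, W, hW, ⟨W.k - 1, by omega⟩, rfl, Or.inr ?_⟩
      · intro heq; rw [← he] at heq
        have := congrArg Fin.val (htrW heq)
        simp at this; omega
      · rw [← hv]
        have h1 : (⟨W.k - 1, by omega⟩ : Fin W.k).succ = Fin.last W.k := by
          ext; simp; omega
        have h2 : (i.castSucc : Fin (W.k + 1)) = 0 := by
          ext; simp; omega
        rw [h1, h2, ← hc0]
  · -- v = W.vtx i.succ ; use next edge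
    by_cases hp : i.val + 1 < W.k
    · refine ⟨W.edge ⟨i.val + 1, hp⟩, ?_, W, hW, ⟨i.val + 1, hp⟩, rfl, Or.inl ?_⟩
      · intro heq; rw [← he] at heq
        have := congrArg Fin.val (htrW heq)
        simp at this
      · rw [← hv]
        have h1 : (⟨i.val + 1, hp⟩ : Fin W.k).castSucc = i.succ := by ext; simp
        rw [h1]
    · -- i.val + 1 = k : v = vtx last = vtx 0 ; use edge 0
      refine ⟨W.edge ⟨0, hkpos⟩, ?_, W, hW, ⟨0, hkpos⟩, rfl, Or.inl ?_⟩
      · intro heq; rw [← he] at heq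
        have := congrArg Fin.val (htrW heq)
        simp at this; omega
      · rw [← hv]
        have h1 : (i.succ : Fin (W.k + 1)) = Fin.last W.k := by
          ext; simp; omega
        have h2 : ((⟨0, hkpos⟩ : Fin W.k).castSucc : Fin (W.k + 1)) = 0 := by
          ext; simp
        rw [h1, h2, ← hc0]

end AuxBasic
section AuxC

variable {H : Hypergraph'} {F : Set H.Walk} {x : H.V ⊕ H.E}
  {C : (H.incidenceGraph).Walk x x}

lemma d_adj_of_gf {z w : H.V ⊕ H.E} (h1 : (H.eulerSubgraph F).Adj z w)
    (h2 : s(z, w) ∉ C.edges) :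
    (symmDiffEdges (H.eulerSubgraph F) {s | s ∈ C.edges}).Adj z w := by
  rw [symmDiffEdges, SimpleGraph.fromEdgeSet_adj]
  exact ⟨Set.mem_symmDiff.mpr (Or.inl ⟨(SimpleGraph.mem_edgeSet _).mpr h1, h2⟩), h1.ne⟩

lemma d_adj_of_c {z w : H.V ⊕ H.E} (h1 : s(z, w) ∈ C.edges)
    (h2 : s(z, w) ∉ (H.eulerSubgraph F).edgeSet) :
    (symmDiffEdges (H.eulerSubgraph F) {s | s ∈ C.edges}).Adj z w := by
  rw [symmDiffEdges, SimpleGraph.fromEdgeSet_adj]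
  exact ⟨Set.mem_symmDiff.mpr (Or.inr ⟨h1, h2⟩), (C.adj_of_mem_edges h1).ne⟩

lemma d_adj_cases {z w : H.V ⊕ H.E}
    (h : (symmDiffEdges (H.eulerSubgraph F) {s | s ∈ C.edges}).Adj z w) :
    (s(z, w) ∈ (H.eulerSubgraph F).edgeSet ∧ s(z, w) ∉ C.edges) ∨
      (s(z, w) ∈ C.edges ∧ s(z, w) ∉ (H.eulerSubgraph F).edgeSet) := by
  rw [symmDiffEdges, SimpleGraph.fromEdgeSet_adj] at h
  have := Set.mem_symmDiff.mp h.1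
  tauto

/-- At an e-vertex of `C`: the unique `C ∩ G_F` edge, and a surviving `G_F` edge. -/
lemma evtx_edges (hC : IsInterchanging H F C) {e : H.E}
    (he : (Sum.inr e : H.V ⊕ H.E) ∈ C.support) :
    ∃ (v0 : H.V) (g : Sym2 (H.V ⊕ H.E)), H.ConsecIn F v0 e ∧
      s(Sum.inl v0, Sum.inr e) ∈ C.edges ∧
      (∀ s ∈ C.edges, (Sum.inr e : H.V ⊕ H.E) ∈ s →
        s ∈ (H.eulerSubgraph F).edgeSet → s = s(Sum.inl v0, Sum.inr e)) ∧
      g ∈ (H.eulerSubgraph F).edgeSet ∧ g ∉ C.edges ∧ (Sum.inr e : H.V ⊕ H.E) ∈ g := by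
  obtain ⟨s0, ⟨hs0C, hs0mem, hs0gf⟩, huniq⟩ := hC.2 e he
  obtain ⟨z, hz⟩ := Sym2.mem_iff_exists.mp hs0mem
  subst hz
  have hadj : (H.eulerSubgraph F).Adj (Sum.inr e) z := (SimpleGraph.mem_edgeSet _).mp hs0gf
  obtain ⟨v0, e', hce, hcase⟩ := gf_adj_cases hadj
  rcases hcase with ⟨h1, h2⟩ | ⟨h1, h2⟩
  · exact absurd h1 (by simp)
  · rw [Sum.inr.injEq] at h1; subst h1; subst h2
    have hswap : (s(Sum.inr e, Sum.inl v0) : Sym2 (H.V ⊕ H.E)) = s(Sum.inl v0, Sum.inr e) :=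
      Sym2.eq_swap
    rw [hswap] at hs0C hs0gf huniq
    have huniq' : ∀ s ∈ C.edges, (Sum.inr e : H.V ⊕ H.E) ∈ s →
        s ∈ (H.eulerSubgraph F).edgeSet → s = s(Sum.inl v0, Sum.inr e) := by
      intro s h1 h2 h3; exact huniq s ⟨h1, h2, h3⟩
    obtain ⟨a, b, hab, ha, hb⟩ := consec_pair hce
    by_cases hga : (s(Sum.inl a, Sum.inr e) : Sym2 (H.V ⊕ H.E)) = s(Sum.inl v0, Sum.inr e)
    · refine ⟨v0, s(Sum.inl b, Sum.inr e), hce, hs0C, huniq', gf_edge_iff.mpr hb, ?_, by simp⟩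
      intro hmem
      have hgb : (s(Sum.inl b, Sum.inr e) : Sym2 (H.V ⊕ H.E)) = s(Sum.inl v0, Sum.inr e) :=
        huniq' _ hmem (by simp) (gf_edge_iff.mpr hb)
      have hA : a = v0 := by
        have := Sym2.eq_iff.mp hga
        rcases this with ⟨h, -⟩ | ⟨h, -⟩
        · exact Sum.inl_injective h
        · exact absurd h (by simp)
      have hB : b = v0 := by
        have := Sym2.eq_iff.mp hgb
        rcases this with ⟨h, -⟩ | ⟨h, -⟩
        · exact Sum.inl_injective h
        · exact absurd h (by simp)
      exact hab (hA.trans hB.symm)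
    · refine ⟨v0, s(Sum.inl a, Sum.inr e), hce, hs0C, huniq', gf_edge_iff.mpr ha, ?_, by simp⟩
      intro hmem
      exact hga (huniq' _ hmem (by simp) (gf_edge_iff.mpr ha))

end AuxC
section AuxReach

variable {H : Hypergraph'} {F : Set H.Walk} {x : H.V ⊕ H.E}
  {C : (H.incidenceGraph).Walk x x}

/-- Two surviving `G_F`-edges in the same `G_F`-component meeting `C` are joined in the
induced symmetric-difference graph. -/
lemma comp_reach
    (hyp : ∀ c : (H.eulerSubgraph F).ConnectedComponent,
      (∃ y ∈ C.support, (H.eulerSubgraph F).connectedComponentMk y = c) →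
      ntComps (((H.eulerSubgraph F).deleteEdges {s | s ∈ C.edges}).induce
        {z | (H.eulerSubgraph F).connectedComponentMk z = c}) ≤ 1)
    {z w z' w' : H.V ⊕ H.E}
    (hzw : (H.eulerSubgraph F).Adj z w) (hzwC : s(z, w) ∉ C.edges)
    (hzw' : (H.eulerSubgraph F).Adj z' w') (hzwC' : s(z', w') ∉ C.edges)
    (hreach : (H.eulerSubgraph F).Reachable z z')
    {y : H.V ⊕ H.E} (hy : y ∈ C.support) (hzy : (H.eulerSubgraph F).Reachable z y)
    (hzS : z ∈ {t | ∃ y ∈ C.support, (H.eulerSubgraph F).Reachable t y})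
    (hzS' : z' ∈ {t | ∃ y ∈ C.support, (H.eulerSubgraph F).Reachable t y}) :
    ((symmDiffEdges (H.eulerSubgraph F) {s | s ∈ C.edges}).induce
      {t | ∃ y ∈ C.support, (H.eulerSubgraph F).Reachable t y}).Reachable ⟨z, hzS⟩ ⟨z', hzS'⟩ := by
  classical
  set GF := H.eulerSubgraph F with hGF
  set c := GF.connectedComponentMk z with hc
  have hcC : ∃ y ∈ C.support, GF.connectedComponentMk y = c := by
    refine ⟨y, hy, ?_⟩
    rw [hc]
    exact SimpleGraph.ConnectedComponent.sound hzy.symm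
  have hnt := hyp c hcC
  set A : Set (H.V ⊕ H.E) := {t | GF.connectedComponentMk t = c} with hA
  set K := (GF.deleteEdges {s | s ∈ C.edges}).induce A with hK
  have hzA : z ∈ A := rfl
  have hwA : w ∈ A := (SimpleGraph.ConnectedComponent.sound hzw.reachable.symm)
  have hzA' : z' ∈ A := SimpleGraph.ConnectedComponent.sound hreach.symm
  have hwA' : w' ∈ A :=
    (SimpleGraph.ConnectedComponent.sound (hzw'.reachable.symm.trans hreach.symm))
  have hKadj : K.Adj ⟨z, hzA⟩ ⟨w, hwA⟩ := by
    have hd : (GF.deleteEdges {s | s ∈ C.edges}).Adj z w := by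
      rw [SimpleGraph.deleteEdges_adj]; exact ⟨hzw, hzwC⟩
    exact hd
  have hKadj' : K.Adj ⟨z', hzA'⟩ ⟨w', hwA'⟩ := by
    have hd : (GF.deleteEdges {s | s ∈ C.edges}).Adj z' w' := by
      rw [SimpleGraph.deleteEdges_adj]; exact ⟨hzw', hzwC'⟩
    exact hd
  have hcc : K.connectedComponentMk ⟨z, hzA⟩ = K.connectedComponentMk ⟨z', hzA'⟩ := by
    have h1 : K.connectedComponentMk ⟨z, hzA⟩ ∈ {d : K.ConnectedComponent | NontrivComp K d} :=
      ⟨_, _, hKadj, rfl⟩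
    have h2 : K.connectedComponentMk ⟨z', hzA'⟩ ∈ {d : K.ConnectedComponent | NontrivComp K d} :=
      ⟨_, _, hKadj', rfl⟩
    exact (Set.ncard_le_one_iff (Set.toFinite _)).mp hnt h1 h2
  have hKreach : K.Reachable ⟨z, hzA⟩ ⟨z', hzA'⟩ :=
    SimpleGraph.ConnectedComponent.exact hcc
  have hAB : A ⊆ {t | ∃ y ∈ C.support, GF.Reachable t y} := by
    intro t ht
    have h1 : GF.connectedComponentMk t = GF.connectedComponentMk z := ht.trans hc
    exact ⟨y, hy, (SimpleGraph.ConnectedComponent.exact h1).trans hzy⟩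
  have := aux_reach_induce_mono (G1 := GF.deleteEdges {s | s ∈ C.edges})
    (G2 := symmDiffEdges GF {s | s ∈ C.edges}) hAB
    (fun a b _ _ hab => d_adj_of_gf ((SimpleGraph.deleteEdges_adj).mp hab).1
      ((SimpleGraph.deleteEdges_adj).mp hab).2)
    hzA hzA' hKreach
  exact this

end AuxReach
section AuxStep

variable {H : Hypergraph'} {F : Set H.Walk} {x : H.V ⊕ H.E}
  {C : (H.incidenceGraph).Walk x x}

lemma mem_S_of_support {t : H.V ⊕ H.E} (h : t ∈ C.support) :
    t ∈ {z | ∃ y ∈ C.support, (H.eulerSubgraph F).Reachable z y} :=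
  ⟨t, h, SimpleGraph.Reachable.refl t⟩

lemma d_reach_of_adj {z w : H.V ⊕ H.E}
    (hz : z ∈ {t | ∃ y ∈ C.support, (H.eulerSubgraph F).Reachable t y})
    (hw : w ∈ {t | ∃ y ∈ C.support, (H.eulerSubgraph F).Reachable t y})
    (h : (symmDiffEdges (H.eulerSubgraph F) {s | s ∈ C.edges}).Adj z w) :
    ((symmDiffEdges (H.eulerSubgraph F) {s | s ∈ C.edges}).induce
      {t | ∃ y ∈ C.support, (H.eulerSubgraph F).Reachable t y}).Reachable ⟨z, hz⟩ ⟨w, hw⟩ := by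
  have : ((symmDiffEdges (H.eulerSubgraph F) {s | s ∈ C.edges}).induce
      {t | ∃ y ∈ C.support, (H.eulerSubgraph F).Reachable t y}).Adj ⟨z, hz⟩ ⟨w, hw⟩ := h
  exact this.reachable

lemma cycle_edge_pair (hcyc : C.IsCycle) {u : H.V ⊕ H.E} (hu : u ∈ C.support)
    {s1 s2 : Sym2 (H.V ⊕ H.E)} (h1 : s1 ∈ C.edges) (h2 : s2 ∈ C.edges) (hne : s1 ≠ s2)
    (hu1 : u ∈ s1) (hu2 : u ∈ s2) : ∀ s ∈ C.edges, u ∈ s → s = s1 ∨ s = s2 := by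
  obtain ⟨a, b, hab, haC, hbC, hua, hub, hchar⟩ := aux_cycle_two_edges hcyc hu
  intro s hs hus
  rcases hchar s hs hus with rfl | rfl <;>
    rcases hchar s1 h1 hu1 with rfl | rfl <;> rcases hchar s2 h2 hu2 with rfl | rfl <;> tauto

/-- The step lemma: consecutive e-vertices along `C` are joined in the induced
symmetric difference graph. -/
lemma step_lemma (hF : H.IsEulerFamily F) (hC : IsInterchanging H F C)
    (hyp : ∀ c : (H.eulerSubgraph F).ConnectedComponent,
      (∃ y ∈ C.support, (H.eulerSubgraph F).connectedComponentMk y = c) →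
      ntComps (((H.eulerSubgraph F).deleteEdges {s | s ∈ C.edges}).induce
        {z | (H.eulerSubgraph F).connectedComponentMk z = c}) ≤ 1)
    {q1 q2 : H.E} {u : H.V}
    (hq1 : (Sum.inr q1 : H.V ⊕ H.E) ∈ C.support)
    (hq2 : (Sum.inr q2 : H.V ⊕ H.E) ∈ C.support)
    (hu : (Sum.inl u : H.V ⊕ H.E) ∈ C.support)
    (hs1 : s(Sum.inr q1, Sum.inl u) ∈ C.edges)
    (hs2 : s(Sum.inl u, Sum.inr q2) ∈ C.edges)
    (hne : (s(Sum.inr q1, Sum.inl u) : Sym2 (H.V ⊕ H.E)) ≠ s(Sum.inl u, Sum.inr q2)) :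
    ((symmDiffEdges (H.eulerSubgraph F) {s | s ∈ C.edges}).induce
      {t | ∃ y ∈ C.support, (H.eulerSubgraph F).Reachable t y}).Reachable
      ⟨Sum.inr q1, mem_S_of_support hq1⟩ ⟨Sum.inr q2, mem_S_of_support hq2⟩ := by
  classical
  have hpair := cycle_edge_pair hC.1 hu hs1 hs2 hne (by simp) (by simp)
  have heq1 : (s(Sum.inr q1, Sum.inl u) : Sym2 (H.V ⊕ H.E)) = s(Sum.inl u, Sum.inr q1) :=
    Sym2.eq_swap
  by_cases h1 : (s(Sum.inr q1, Sum.inl u) : Sym2 (H.V ⊕ H.E)) ∈ (H.eulerSubgraph F).edgeSet <;>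
    by_cases h2 : (s(Sum.inl u, Sum.inr q2) : Sym2 (H.V ⊕ H.E)) ∈ (H.eulerSubgraph F).edgeSet
  · -- both in G_F : q1, q2 in same component; use surviving edges at q1, q2
    obtain ⟨v1, g1, -, -, -, hg1gf, hg1C, hg1mem⟩ := evtx_edges hC hq1
    obtain ⟨v2, g2, -, -, -, hg2gf, hg2C, hg2mem⟩ := evtx_edges hC hq2
    obtain ⟨w1, rfl⟩ := Sym2.mem_iff_exists.mp hg1mem
    obtain ⟨w2, rfl⟩ := Sym2.mem_iff_exists.mp hg2mem
    have hreach : (H.eulerSubgraph F).Reachable (Sum.inr q1) (Sum.inr q2) :=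
      ((SimpleGraph.mem_edgeSet _).mp h1).reachable.trans
        ((SimpleGraph.mem_edgeSet _).mp h2).reachable
    exact comp_reach hyp ((SimpleGraph.mem_edgeSet _).mp hg1gf) hg1C
      ((SimpleGraph.mem_edgeSet _).mp hg2gf) hg2C hreach hq1 (SimpleGraph.Reachable.refl _)
      (mem_S_of_support hq1) (mem_S_of_support hq2)
  · -- s1 in G_F, s2 not : link u to q1 via components, u to q2 directly
    have hd2 : (symmDiffEdges (H.eulerSubgraph F) {s | s ∈ C.edges}).Adj (Sum.inl u) (Sum.inr q2) :=
      d_adj_of_c hs2 h2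
    -- u has a second G_F edge avoiding C
    have hcons1 : H.ConsecIn F u q1 := gf_edge_iff.mp (heq1 ▸ h1)
    obtain ⟨e', he'ne, he'cons⟩ := vtx_second_edge hF hcons1
    have hs'gf : (s(Sum.inl u, Sum.inr e') : Sym2 (H.V ⊕ H.E)) ∈ (H.eulerSubgraph F).edgeSet :=
      gf_edge_iff.mpr he'cons
    have hs'C : (s(Sum.inl u, Sum.inr e') : Sym2 (H.V ⊕ H.E)) ∉ C.edges := by
      intro hmem
      rcases hpair _ hmem (by simp) with heq | heq
      · rw [heq1] at heq
        have : Sum.inr e' = (Sum.inr q1 : H.V ⊕ H.E) := by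
          have := Sym2.eq_iff.mp heq
          rcases this with ⟨-, h⟩ | ⟨h, -⟩
          · exact h
          · exact absurd h (by simp)
        rw [Sum.inr.injEq] at this; exact he'ne this
      · have : Sum.inr e' = (Sum.inr q2 : H.V ⊕ H.E) := by
          have := Sym2.eq_iff.mp heq
          rcases this with ⟨-, h⟩ | ⟨h, -⟩
          · exact h
          · exact absurd h (by simp)
        rw [Sum.inr.injEq] at this; subst this; exact h2 hs'gf
    obtain ⟨v1, g1, -, -, -, hg1gf, hg1C, hg1mem⟩ := evtx_edges hC hq1
    obtain ⟨w1, rfl⟩ := Sym2.mem_iff_exists.mp hg1mem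
    have hreach : (H.eulerSubgraph F).Reachable (Sum.inl u) (Sum.inr q1) :=
      ((SimpleGraph.mem_edgeSet _).mp (heq1 ▸ h1)).reachable
    have hu_q1 := comp_reach hyp ((SimpleGraph.mem_edgeSet _).mp hs'gf) hs'C
      ((SimpleGraph.mem_edgeSet _).mp hg1gf) hg1C hreach hu (SimpleGraph.Reachable.refl _)
      (mem_S_of_support hu) (mem_S_of_support hq1)
    exact (hu_q1.symm.trans (d_reach_of_adj (mem_S_of_support hu) (mem_S_of_support hq2) hd2)).symm.symm
  · -- s1 not in G_F, s2 in : symmetric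
    have hd1 : (symmDiffEdges (H.eulerSubgraph F) {s | s ∈ C.edges}).Adj (Sum.inr q1) (Sum.inl u) :=
      d_adj_of_c hs1 h1
    have hcons2 : H.ConsecIn F u q2 := gf_edge_iff.mp h2
    obtain ⟨e', he'ne, he'cons⟩ := vtx_second_edge hF hcons2
    have hs'gf : (s(Sum.inl u, Sum.inr e') : Sym2 (H.V ⊕ H.E)) ∈ (H.eulerSubgraph F).edgeSet :=
      gf_edge_iff.mpr he'cons
    have hs'C : (s(Sum.inl u, Sum.inr e') : Sym2 (H.V ⊕ H.E)) ∉ C.edges := by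
      intro hmem
      rcases hpair _ hmem (by simp) with heq | heq
      · rw [heq1] at heq
        have : Sum.inr e' = (Sum.inr q1 : H.V ⊕ H.E) := by
          have := Sym2.eq_iff.mp heq
          rcases this with ⟨-, h⟩ | ⟨h, -⟩
          · exact h
          · exact absurd h (by simp)
        rw [Sum.inr.injEq] at this; subst this
        exact h1 (heq1 ▸ hs'gf)
      · have : Sum.inr e' = (Sum.inr q2 : H.V ⊕ H.E) := by
          have := Sym2.eq_iff.mp heq
          rcases this with ⟨-, h⟩ | ⟨h, -⟩
          · exact h
          · exact absurd h (by simp)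
        rw [Sum.inr.injEq] at this; exact he'ne this
    obtain ⟨v2, g2, -, -, -, hg2gf, hg2C, hg2mem⟩ := evtx_edges hC hq2
    obtain ⟨w2, rfl⟩ := Sym2.mem_iff_exists.mp hg2mem
    have hreach : (H.eulerSubgraph F).Reachable (Sum.inl u) (Sum.inr q2) :=
      ((SimpleGraph.mem_edgeSet _).mp h2).reachable
    have hu_q2 := comp_reach hyp ((SimpleGraph.mem_edgeSet _).mp hs'gf) hs'C
      ((SimpleGraph.mem_edgeSet _).mp hg2gf) hg2C hreach hu (SimpleGraph.Reachable.refl _)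
      (mem_S_of_support hu) (mem_S_of_support hq2)
    exact (d_reach_of_adj (mem_S_of_support hq1) (mem_S_of_support hu) hd1).trans hu_q2
  · -- neither in G_F : direct edges
    exact (d_reach_of_adj (mem_S_of_support hq1) (mem_S_of_support hu)
        (d_adj_of_c hs1 h1)).trans
      (d_reach_of_adj (mem_S_of_support hu) (mem_S_of_support hq2) (d_adj_of_c hs2 h2))

end AuxStep
section AuxChain

variable {H : Hypergraph'} {F : Set H.Walk} {x : H.V ⊕ H.E}
  {C : (H.incidenceGraph).Walk x x}

/-- All e-vertices along a sub-walk of `C` are joined to the starting e-vertex. -/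
lemma chain_lemma (hF : H.IsEulerFamily F) (hC : IsInterchanging H F C)
    (hyp : ∀ c : (H.eulerSubgraph F).ConnectedComponent,
      (∃ y ∈ C.support, (H.eulerSubgraph F).connectedComponentMk y = c) →
      ntComps (((H.eulerSubgraph F).deleteEdges {s | s ∈ C.edges}).induce
        {z | (H.eulerSubgraph F).connectedComponentMk z = c}) ≤ 1) :
    ∀ {a b : H.V ⊕ H.E} (P : (H.incidenceGraph).Walk a b),
    (∀ s ∈ P.edges, s ∈ C.edges) → (∀ t ∈ P.support, t ∈ C.support) → P.edges.Nodup →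
    ∀ (qa : H.E) (hqa : (Sum.inr qa : H.V ⊕ H.E) ∈ C.support),
    (a = Sum.inr qa ∨ (∃ u : H.V, a = Sum.inl u ∧
      s(Sum.inr qa, Sum.inl u) ∈ C.edges ∧ s(Sum.inr qa, Sum.inl u) ∉ P.edges)) →
    ∀ (e : H.E) (he : (Sum.inr e : H.V ⊕ H.E) ∈ C.support),
      (Sum.inr e : H.V ⊕ H.E) ∈ P.support →
    ((symmDiffEdges (H.eulerSubgraph F) {s | s ∈ C.edges}).induce
      {t | ∃ y ∈ C.support, (H.eulerSubgraph F).Reachable t y}).Reachable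
      ⟨Sum.inr e, mem_S_of_support he⟩ ⟨Sum.inr qa, mem_S_of_support hqa⟩ := by
  intro a b P
  induction P with
  | nil =>
    intro hsub hsup hnd qa hqa hlink e he hmem
    rcases hlink with rfl | ⟨u, rfl, -, -⟩
    · simp only [SimpleGraph.Walk.support_nil, List.mem_singleton] at hmem
      rw [Sum.inr.injEq] at hmem; subst hmem
      rfl
    · simp only [SimpleGraph.Walk.support_nil, List.mem_singleton] at hmem
      exact absurd hmem (by simp)
  | @cons a c b hadj q ih =>
    intro hsub hsup hnd qa hqa hlink e he hmem
    have hsub' : ∀ s ∈ q.edges, s ∈ C.edges := fun s hs =>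
      hsub s (by rw [SimpleGraph.Walk.edges_cons]; exact List.mem_cons_of_mem _ hs)
    have hsup' : ∀ t ∈ q.support, t ∈ C.support := fun t ht =>
      hsup t (by rw [SimpleGraph.Walk.support_cons]; exact List.mem_cons_of_mem _ ht)
    have hnd' : q.edges.Nodup := by
      rw [SimpleGraph.Walk.edges_cons] at hnd; exact hnd.of_cons
    have hfirst : s(a, c) ∈ C.edges := hsub _ (by rw [SimpleGraph.Walk.edges_cons]; simp)
    rcases hlink with rfl | ⟨u, rfl, hlC, hlP⟩
    · -- a = inr qa
      rcases List.mem_cons.mp (by rw [SimpleGraph.Walk.support_cons] at hmem; exact hmem)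
        with heq | hmem'
      · rw [Sum.inr.injEq] at heq; subst heq; rfl
      · -- c must be inl
        obtain ⟨v', e', hcase⟩ := gi_adj_cases hadj
        rcases hcase with ⟨h1, h2⟩ | ⟨h1, h2⟩
        · exact absurd h1 (by simp)
        · rw [Sum.inr.injEq] at h1; subst h2
          have hnotin : s(Sum.inr qa, Sum.inl v') ∉ q.edges := by
            rw [SimpleGraph.Walk.edges_cons] at hnd
            have := hnd.notMem
            rwa [h1] at this ⊢
          exact ih hsub' hsup' hnd' qa hqa
            (Or.inr ⟨v', rfl, hfirst, hnotin⟩) e he hmem'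
    · -- a = inl u, linked from qa
      obtain ⟨v', e', hcase⟩ := gi_adj_cases hadj
      rcases hcase with ⟨h1, h2⟩ | ⟨h1, h2⟩
      swap
      · exact absurd h1 (by simp)
      · rw [Sum.inl.injEq] at h1; subst h2; subst h1
        -- step: qa -- u -- e'
        have hne : (s(Sum.inr qa, Sum.inl u) : Sym2 (H.V ⊕ H.E)) ≠ s(Sum.inl u, Sum.inr e') := by
          intro heq
          rw [heq] at hlP
          exact hlP (by rw [SimpleGraph.Walk.edges_cons]; simp)
        have he' : (Sum.inr e' : H.V ⊕ H.E) ∈ C.support :=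
          hsup _ (by rw [SimpleGraph.Walk.support_cons]; simp)
        have hstep := step_lemma hF hC hyp hqa he'
          (hsup _ (by rw [SimpleGraph.Walk.support_cons]; simp)) hlC hfirst hne
        rcases List.mem_cons.mp (by rw [SimpleGraph.Walk.support_cons] at hmem; exact hmem)
          with heq | hmem'
        · exact absurd heq (by simp)
        · have hrec := ih hsub' hsup' hnd' e' he' (Or.inl rfl) e he hmem'
          exact hrec.trans hstep.symm
  
end AuxChain
section AuxMaster

variable {H : Hypergraph'} {F : Set H.Walk} {x : H.V ⊕ H.E}
  {C : (H.incidenceGraph).Walk x x}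

lemma master_reach (hF : H.IsEulerFamily F) (hC : IsInterchanging H F C)
    (hyp : ∀ c : (H.eulerSubgraph F).ConnectedComponent,
      (∃ y ∈ C.support, (H.eulerSubgraph F).connectedComponentMk y = c) →
      ntComps (((H.eulerSubgraph F).deleteEdges {s | s ∈ C.edges}).induce
        {z | (H.eulerSubgraph F).connectedComponentMk z = c}) ≤ 1)
    {q0 : H.E} (hq0 : (Sum.inr q0 : H.V ⊕ H.E) ∈ C.support)
    (hall : ∀ (e : H.E) (he : (Sum.inr e : H.V ⊕ H.E) ∈ C.support),
      ((symmDiffEdges (H.eulerSubgraph F) {s | s ∈ C.edges}).induce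
        {t | ∃ y ∈ C.support, (H.eulerSubgraph F).Reachable t y}).Reachable
        ⟨Sum.inr e, mem_S_of_support he⟩ ⟨Sum.inr q0, mem_S_of_support hq0⟩)
    {z w : H.V ⊕ H.E}
    (hz : z ∈ {t | ∃ y ∈ C.support, (H.eulerSubgraph F).Reachable t y})
    (hw : w ∈ {t | ∃ y ∈ C.support, (H.eulerSubgraph F).Reachable t y})
    (hDzw : (symmDiffEdges (H.eulerSubgraph F) {s | s ∈ C.edges}).Adj z w) :
    ((symmDiffEdges (H.eulerSubgraph F) {s | s ∈ C.edges}).induce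
      {t | ∃ y ∈ C.support, (H.eulerSubgraph F).Reachable t y}).Reachable
      ⟨z, hz⟩ ⟨Sum.inr q0, mem_S_of_support hq0⟩ := by
  classical
  rcases d_adj_cases hDzw with ⟨hgf, hnC⟩ | ⟨hcC, hngf⟩
  · -- G_F edge surviving
    have hGFadj : (H.eulerSubgraph F).Adj z w := (SimpleGraph.mem_edgeSet _).mp hgf
    obtain ⟨y, hyC, hzy⟩ := id hz
    rcases hy0 : y with v | e0
    · -- y = inl u
      subst hy0
      by_cases hex : ∃ e1 : H.E, s(Sum.inl v, Sum.inr e1) ∈ C.edges ∧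
          s(Sum.inl v, Sum.inr e1) ∈ (H.eulerSubgraph F).edgeSet
      · obtain ⟨e1, he1C, he1gf⟩ := hex
        have he1sup : (Sum.inr e1 : H.V ⊕ H.E) ∈ C.support :=
          C.snd_mem_support_of_mem_edges he1C
        have hreach' : (H.eulerSubgraph F).Reachable z (Sum.inr e1) :=
          hzy.trans ((SimpleGraph.mem_edgeSet _).mp he1gf).reachable
        obtain ⟨v1, g1, -, -, -, hg1gf, hg1C, hg1mem⟩ := evtx_edges hC he1sup
        obtain ⟨w1, rfl⟩ := Sym2.mem_iff_exists.mp hg1mem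
        exact (comp_reach hyp hGFadj hnC ((SimpleGraph.mem_edgeSet _).mp hg1gf) hg1C
          hreach' he1sup hreach' hz (mem_S_of_support he1sup)).trans (hall e1 he1sup)
      · push_neg at hex
        -- z to v in D''
        have hru : ((symmDiffEdges (H.eulerSubgraph F) {s | s ∈ C.edges}).induce
            {t | ∃ y ∈ C.support, (H.eulerSubgraph F).Reachable t y}).Reachable
            ⟨z, hz⟩ ⟨Sum.inl v, mem_S_of_support hyC⟩ := by
          by_cases h0 : z = Sum.inl v
          · subst h0; rfl
          · obtain ⟨p⟩ := hzy.symm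
            cases p with
            | nil => exact absurd rfl (Ne.symm h0)
            | @cons _ t _ hadj0 p0 =>
              obtain ⟨v', e', hce', hcase⟩ := gf_adj_cases hadj0
              rcases hcase with ⟨ha1, ha2⟩ | ⟨ha1, ha2⟩
              · rw [Sum.inl.injEq] at ha1; subst ha2
                have hgfe : (s(Sum.inl v, Sum.inr e') : Sym2 (H.V ⊕ H.E)) ∈
                    (H.eulerSubgraph F).edgeSet := by
                  rw [ha1]; exact gf_edge_iff.mpr hce'
                have hnmem : (s(Sum.inl v, Sum.inr e') : Sym2 (H.V ⊕ H.E)) ∉ C.edges :=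
                  fun hmem => (hex e' hmem) hgfe
                exact comp_reach hyp hGFadj hnC ((SimpleGraph.mem_edgeSet _).mp hgfe) hnmem
                  hzy hyC hzy hz (mem_S_of_support hyC)
              · exact absurd ha1 (by simp)
        -- v to some e1 on C via a non-G_F C-edge
        obtain ⟨s1, s2, -, hs1C, -, hus1, -, -⟩ := aux_cycle_two_edges hC.1 hyC
        obtain ⟨t, rfl⟩ := Sym2.mem_iff_exists.mp hus1
        obtain ⟨v', e', hcase⟩ := gi_adj_cases (C.adj_of_mem_edges hs1C)
        rcases hcase with ⟨ha1, ha2⟩ | ⟨ha1, ha2⟩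
        · subst ha2
          have he1sup : (Sum.inr e' : H.V ⊕ H.E) ∈ C.support :=
            C.snd_mem_support_of_mem_edges hs1C
          have hd : (symmDiffEdges (H.eulerSubgraph F) {s | s ∈ C.edges}).Adj
              (Sum.inl v) (Sum.inr e') := by
            refine d_adj_of_c hs1C (fun hmem => (hex e' hs1C) hmem)
          exact (hru.trans (d_reach_of_adj (mem_S_of_support hyC)
            (mem_S_of_support he1sup) hd)).trans (hall e' he1sup)
        · exact absurd ha1 (by simp)
    · -- y = inr e0
      subst hy0
      obtain ⟨v1, g1, -, -, -, hg1gf, hg1C, hg1mem⟩ := evtx_edges hC hyC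
      obtain ⟨w1, rfl⟩ := Sym2.mem_iff_exists.mp hg1mem
      exact (comp_reach hyp hGFadj hnC ((SimpleGraph.mem_edgeSet _).mp hg1gf) hg1C
        hzy hyC hzy hz (mem_S_of_support hyC)).trans (hall e0 hyC)
  · -- C edge not in G_F
    have hzC : z ∈ C.support := by
      obtain ⟨t, ht⟩ := Sym2.mem_iff_exists.mp (Sym2.mem_mk_left z w)
      exact C.fst_mem_support_of_mem_edges (ht ▸ hcC)
    have hwC : w ∈ C.support := C.snd_mem_support_of_mem_edges hcC
    obtain ⟨v', e', hcase⟩ := gi_adj_cases (C.adj_of_mem_edges hcC)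
    rcases hcase with ⟨ha1, ha2⟩ | ⟨ha1, ha2⟩
    · subst ha1; subst ha2
      exact (d_reach_of_adj hz hw hDzw).trans (hall e' hwC)
    · subst ha1
      exact hall e' hzC
end AuxMaster

/-- Lemma 4.7: let `C` be an `F`-interchanging cycle, and suppose that for each
connected component of `G_F` meeting `C`, deleting the edges of `C` from that
component leaves at most one nontrivial connected component. Then the subgraph
of `G_F Δ C` induced by the union of the vertex sets of the components of `G_F`
meeting `C` has at most one nontrivial connected component. -/
theorem symmDiff_induce_ntComps_le_one (H : Hypergraph') (F : Set H.Walk)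
    (hF : H.IsEulerFamily F) {x : H.V ⊕ H.E} (C : (H.incidenceGraph).Walk x x)
    (hC : IsInterchanging H F C)
    (hyp : ∀ c : (H.eulerSubgraph F).ConnectedComponent,
      (∃ y ∈ C.support, (H.eulerSubgraph F).connectedComponentMk y = c) →
      ntComps (((H.eulerSubgraph F).deleteEdges {s | s ∈ C.edges}).induce
        {z | (H.eulerSubgraph F).connectedComponentMk z = c}) ≤ 1) :
    ntComps ((symmDiffEdges (H.eulerSubgraph F) {s | s ∈ C.edges}).induce
      {z | ∃ y ∈ C.support, (H.eulerSubgraph F).Reachable z y}) ≤ 1 := by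
  classical
  obtain ⟨y0, hadj, P, hP⟩ := SimpleGraph.Walk.not_nil_iff.mp hC.1.not_nil
  have hndC : C.edges.Nodup := hC.1.isCircuit.isTrail.edges_nodup
  -- obtain a base e-vertex q0 with `hall`
  obtain ⟨q0, hq0C, hall⟩ :
      ∃ (q0 : H.E) (hq0C : (Sum.inr q0 : H.V ⊕ H.E) ∈ C.support),
        ∀ (e : H.E) (he : (Sum.inr e : H.V ⊕ H.E) ∈ C.support),
          ((symmDiffEdges (H.eulerSubgraph F) {s | s ∈ C.edges}).induce
            {t | ∃ y ∈ C.support, (H.eulerSubgraph F).Reachable t y}).Reachable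
            ⟨Sum.inr e, mem_S_of_support he⟩ ⟨Sum.inr q0, mem_S_of_support hq0C⟩ := by
    obtain ⟨v', e', hcase⟩ := gi_adj_cases hadj
    rcases hcase with ⟨ha1, ha2⟩ | ⟨ha1, ha2⟩
    · -- x = inl v', y0 = inr e' : use the tail walk P
      subst ha2
      have hq0C : (Sum.inr e' : H.V ⊕ H.E) ∈ C.support := by
        rw [hP, SimpleGraph.Walk.support_cons]
        exact List.mem_cons_of_mem _ P.start_mem_support
      have hsub : ∀ s ∈ P.edges, s ∈ C.edges := by
        intro s hs; rw [hP, SimpleGraph.Walk.edges_cons]; exact List.mem_cons_of_mem _ hs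
      have hsup : ∀ t ∈ P.support, t ∈ C.support := by
        intro t ht; rw [hP, SimpleGraph.Walk.support_cons]; exact List.mem_cons_of_mem _ ht
      have hnd : P.edges.Nodup := by
        rw [hP, SimpleGraph.Walk.edges_cons] at hndC; exact hndC.of_cons
      refine ⟨e', hq0C, fun e he => ?_⟩
      have hmem : (Sum.inr e : H.V ⊕ H.E) ∈ P.support := by
        have := he
        rw [hP, SimpleGraph.Walk.support_cons] at this
        rcases List.mem_cons.mp this with heq | h
        · rw [ha1] at heq; exact absurd heq (by simp)
        · exact h
      exact chain_lemma hF hC hyp P hsub hsup hnd e' hq0C (Or.inl rfl) e he hmem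
    · -- x = inr e' : use C itself
      have hq0C : (Sum.inr e' : H.V ⊕ H.E) ∈ C.support := by
        rw [← ha1]; exact C.start_mem_support
      refine ⟨e', hq0C, fun e he => ?_⟩
      exact chain_lemma hF hC hyp C (fun s hs => hs) (fun t ht => ht) hndC e' hq0C
        (Or.inl ha1) e he he
  -- now count nontrivial components
  show {c | NontrivComp _ c}.ncard ≤ 1
  refine (Set.ncard_le_one_iff (Set.toFinite _)).mpr ?_
  rintro c1 c2 ⟨a1, b1, hadj1, hmk1⟩ ⟨a2, b2, hadj2, hmk2⟩
  have hD1 : (symmDiffEdges (H.eulerSubgraph F) {s | s ∈ C.edges}).Adj a1.1 b1.1 := hadj1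
  have hD2 : (symmDiffEdges (H.eulerSubgraph F) {s | s ∈ C.edges}).Adj a2.1 b2.1 := hadj2
  have hr1 := master_reach hF hC hyp hq0C hall a1.2 b1.2 hD1
  have hr2 := master_reach hF hC hyp hq0C hall a2.2 b2.2 hD2
  rw [← hmk1, ← hmk2]
  have h1 : a1 = (⟨a1.1, a1.2⟩ : {t | ∃ y ∈ C.support, (H.eulerSubgraph F).Reachable t y}) :=
    rfl
  calc _ = _ := SimpleGraph.ConnectedComponent.sound (hr1.trans hr2.symm)
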